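/- arXiv:1406.7025 — 4 statements merged into one kernel-verified Lean document; each statement's English description precedes it below -/
import Mathlib

section
/- Let V be a type of vertices with a label function L : V → Fin (k+1). Suppose f = {v₁, v₂, v₃} is an rk-face, i ≠ 0 is the label of f (i.e., some vertex of f has label i ≠ 0), and v_n is a new vertex not in f with L(v_n) = i. Then each of the three faces {v_n, v₁, v₂}, {v_n, v₂, v₃}, and {v_n, v₁, v₃} created by the face-split operator is an rk-face. -/
/-- A face (finite set of vertices) is regular k-labeled (an rk-face) w.r.t. a label
function `L : V → Fin (k+1)` if some vertex has nonzero label, and any two vertices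
with nonzero labels have equal labels. -/
def rkFace {V : Type*} {k : ℕ} (L : V → Fin (k + 1)) (f : Finset V) : Prop :=
  (∃ v ∈ f, L v ≠ 0) ∧ ∀ v₁ ∈ f, ∀ v₂ ∈ f, L v₁ ≠ 0 → L v₂ ≠ 0 → L v₁ = L v₂

/-- Face split: if `f = {v₁, v₂, v₃}` is an rk-face with label `i ≠ 0`, and the new
vertex `v_n ∉ f` is labeled `i`, then each of the three faces created by the
face-split operator is an rk-face. -/
theorem faceSplit_rkFaces {V : Type*} [DecidableEq V] {k : ℕ}
    (L : V → Fin (k + 1)) (v₁ v₂ v₃ vn : V) (i : Fin (k + 1)) (hi : i ≠ 0)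
    (hf : rkFace L ({v₁, v₂, v₃} : Finset V))
    (hlabel : ∃ v ∈ ({v₁, v₂, v₃} : Finset V), L v = i)
    (hnew : vn ∉ ({v₁, v₂, v₃} : Finset V)) (hLn : L vn = i) :
    rkFace L ({vn, v₁, v₂} : Finset V) ∧
    rkFace L ({vn, v₂, v₃} : Finset V) ∧
    rkFace L ({vn, v₁, v₃} : Finset V) := by
  obtain ⟨w, hw, hwi⟩ := hlabel
  have key : ∀ u ∈ ({v₁, v₂, v₃} : Finset V), L u ≠ 0 → L u = i := by
    intro u hu hu0
    rw [← hwi]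
    exact hf.2 u hu w hw hu0 (hwi ▸ hi)
  have hn0 : L vn ≠ 0 := hLn ▸ hi
  have h1 : v₁ ∈ ({v₁, v₂, v₃} : Finset V) := by simp
  have h2 : v₂ ∈ ({v₁, v₂, v₃} : Finset V) := by simp
  have h3 : v₃ ∈ ({v₁, v₂, v₃} : Finset V) := by simp
  have mk : ∀ a b : V, a ∈ ({v₁, v₂, v₃} : Finset V) → b ∈ ({v₁, v₂, v₃} : Finset V) →
      rkFace L ({vn, a, b} : Finset V) := by
    intro a b ha hb
    refine ⟨⟨vn, by simp, hn0⟩, ?_⟩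
    intro x hx y hy hx0 hy0
    have hxi : L x = i := by
      rcases Finset.mem_insert.1 hx with h | h
      · rw [h, hLn]
      · rcases Finset.mem_insert.1 h with h | h
        · exact key x (h ▸ ha) hx0
        · exact key x ((Finset.mem_singleton.1 h) ▸ hb) hx0
    have hyi : L y = i := by
      rcases Finset.mem_insert.1 hy with h | h
      · rw [h, hLn]
      · rcases Finset.mem_insert.1 h with h | h
        · exact key y (h ▸ ha) hy0
        · exact key y ((Finset.mem_singleton.1 h) ▸ hb) hy0
    rw [hxi, hyi]
  exact ⟨mk v₁ v₂ h1 h2, mk v₂ v₃ h2 h3, mk v₁ v₃ h1 h3⟩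
end

section
/- Let V be a type of vertices with a label function L : V → Fin (k+1), and let F be a set of triangular faces all of which are rk-faces. Let f = {v₁, v₂, v₃} ∈ F with label i ≠ 0, and let v_n ∉ f be a new vertex with L(v_n) = i. Then every face of the set F' = (F \ {f}) ∪ {{v_n, v₁, v₂}, {v_n, v₂, v₃}, {v_n, v₁, v₃}} obtained by one face-split step is an rk-face; i.e., a face split using the labeling rule L(v_n) = L(f) on an rk-mesh produces an rk-mesh. -/
/-- A face split, using the labeling rule `L(v_n) = L(f)`, on an rk-mesh produces
an rk-mesh. -/
theorem faceSplit_rkMesh {V : Type*} [DecidableEq V] {k : ℕ}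
    (L : V → Fin (k + 1)) (F : Set (Finset V)) (hF : ∀ f ∈ F, rkFace L f)
    (v₁ v₂ v₃ vn : V) (i : Fin (k + 1)) (hi : i ≠ 0)
    (hfF : ({v₁, v₂, v₃} : Finset V) ∈ F)
    (hlabel : ∃ v ∈ ({v₁, v₂, v₃} : Finset V), L v = i)
    (hnew : vn ∉ ({v₁, v₂, v₃} : Finset V)) (hLn : L vn = i) :
    ∀ g ∈ (F \ {({v₁, v₂, v₃} : Finset V)}) ∪
        {({vn, v₁, v₂} : Finset V), ({vn, v₂, v₃} : Finset V),
          ({vn, v₁, v₃} : Finset V)},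
      rkFace L g := by
  -- every vertex of the old face with nonzero label has label i
  obtain ⟨v₀, hv₀f, hv₀i⟩ := hlabel
  have hold := hF _ hfF
  have key : ∀ v ∈ ({v₁, v₂, v₃} : Finset V), L v ≠ 0 → L v = i := by
    intro v hv hvne
    have := hold.2 v hv v₀ hv₀f hvne (hv₀i ▸ hi)
    rw [this, hv₀i]
  intro g hg
  rcases hg with hg | hg
  · exact hF _ hg.1
  · have main : ∀ a b : V, a ∈ ({v₁, v₂, v₃} : Finset V) →
        b ∈ ({v₁, v₂, v₃} : Finset V) → rkFace L ({vn, a, b} : Finset V) := by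
      intro a b ha hb
      constructor
      · exact ⟨vn, by simp, hLn ▸ hi⟩
      · intro x hx y hy hxne hyne
        have hx' : L x = i := by
          rcases Finset.mem_insert.mp hx with h | h
          · rw [h, hLn]
          · rcases Finset.mem_insert.mp h with h | h
            · exact key x (h ▸ ha) hxne
            · exact key x ((Finset.mem_singleton.mp h) ▸ hb) hxne
        have hy' : L y = i := by
          rcases Finset.mem_insert.mp hy with h | h
          · rw [h, hLn]
          · rcases Finset.mem_insert.mp h with h | h
            · exact key y (h ▸ ha) hyne
            · exact key y ((Finset.mem_singleton.mp h) ▸ hb) hyne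
        rw [hx', hy']
    rcases hg with hg | hg | hg <;> subst hg
    · exact main v₁ v₂ (by simp) (by simp)
    · exact main v₂ v₃ (by simp) (by simp)
    · exact main v₁ v₃ (by simp) (by simp)
end

section
/- Let V be a type of vertices with a label function L : V → Fin (k+1). Let f^w = {v₁, v₂, v_w} and f^e = {v₁, v₂, v_e} be rk-faces sharing the edge e = {v₁, v₂}, and suppose e is an inner-edge, i.e., L(v₁) = i ≠ 0 or L(v₂) = i ≠ 0. Let v_n be a new vertex distinct from v₁, v₂, v_w, v_e with L(v_n) = i. Then each of the four faces {v_n, v₁, v_w}, {v_n, v₂, v_w}, {v_n, v₁, v_e}, {v_n, v₂, v_e} created by the edge-split operator is an rk-face. -/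
/-- Edge split of an inner-edge: if the rk-faces `{v₁, v₂, v_w}` and `{v₁, v₂, v_e}`
share the inner-edge `{v₁, v₂}` of label `i ≠ 0`, and the new vertex `v_n` is
labeled `i`, then the four faces created by the edge-split operator are rk-faces. -/
theorem edgeSplit_inner_rkFaces {V : Type*} [DecidableEq V] {k : ℕ}
    (L : V → Fin (k + 1)) (v₁ v₂ vw ve vn : V) (i : Fin (k + 1)) (hi : i ≠ 0)
    (hw : rkFace L ({v₁, v₂, vw} : Finset V))
    (he : rkFace L ({v₁, v₂, ve} : Finset V))
    (hinner : L v₁ = i ∨ L v₂ = i)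
    (hdist : vn ≠ v₁ ∧ vn ≠ v₂ ∧ vn ≠ vw ∧ vn ≠ ve) (hLn : L vn = i) :
    rkFace L ({vn, v₁, vw} : Finset V) ∧
    rkFace L ({vn, v₂, vw} : Finset V) ∧
    rkFace L ({vn, v₁, ve} : Finset V) ∧
    rkFace L ({vn, v₂, ve} : Finset V) := by
  -- every nonzero-labeled vertex of the west face has label i
  have hW : ∀ x ∈ ({v₁, v₂, vw} : Finset V), L x ≠ 0 → L x = i := by
    intro x hx hxne
    rcases hinner with h1 | h2
    · have := hw.2 x hx v₁ (by simp) hxne (h1 ▸ hi)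
      rw [this, h1]
    · have := hw.2 x hx v₂ (by simp) hxne (h2 ▸ hi)
      rw [this, h2]
  have hE : ∀ x ∈ ({v₁, v₂, ve} : Finset V), L x ≠ 0 → L x = i := by
    intro x hx hxne
    rcases hinner with h1 | h2
    · have := he.2 x hx v₁ (by simp) hxne (h1 ▸ hi)
      rw [this, h1]
    · have := he.2 x hx v₂ (by simp) hxne (h2 ▸ hi)
      rw [this, h2]
  have key : ∀ a b : V, (∀ x ∈ ({vn, a, b} : Finset V), L x ≠ 0 → L x = i) →
      rkFace L ({vn, a, b} : Finset V) := by
    intro a b h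
    refine ⟨⟨vn, by simp, hLn ▸ hi⟩, ?_⟩
    intro x hx y hy hxne hyne
    rw [h x hx hxne, h y hy hyne]
  have step : ∀ a b : V, a ∈ ({v₁, v₂} : Finset V) →
      (∀ x ∈ ({v₁, v₂, b} : Finset V), L x ≠ 0 → L x = i) →
      rkFace L ({vn, a, b} : Finset V) := by
    intro a b ha h
    apply key
    intro x hx hxne
    simp only [Finset.mem_insert, Finset.mem_singleton] at hx ha
    rcases hx with rfl | rfl | rfl
    · exact hLn
    · rcases ha with rfl | rfl <;> exact h _ (by simp) hxne
    · exact h _ (by simp) hxne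
  exact ⟨step v₁ vw (by simp) hW, step v₂ vw (by simp) hW,
    step v₁ ve (by simp) hE, step v₂ ve (by simp) hE⟩
end

section
/- Let V be a type of vertices with a label function L : V → Fin (k+1). Let f^w = {v₁, v₂, v_w} and f^e = {v₁, v₂, v_e} be rk-faces sharing the boundary-edge e = {v₁, v₂}, i.e., L(v₁) = L(v₂) = 0. Let v_n be a new vertex distinct from v₁, v₂, v_w, v_e with L(v_n) = 0. Then each of the four faces {v_n, v₁, v_w}, {v_n, v₂, v_w}, {v_n, v₁, v_e}, {v_n, v₂, v_e} created by the edge-split operator is an rk-face. -/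
/-- Edge split of a boundary-edge: if the rk-faces `{v₁, v₂, v_w}` and
`{v₁, v₂, v_e}` share the boundary-edge `{v₁, v₂}` (both vertices labeled 0), and
the new vertex `v_n` is labeled 0, then the four faces created by the edge-split
operator are rk-faces. -/
theorem edgeSplit_boundary_rkFaces {V : Type*} [DecidableEq V] {k : ℕ}
    (L : V → Fin (k + 1)) (v₁ v₂ vw ve vn : V)
    (h₁ : L v₁ = 0) (h₂ : L v₂ = 0)
    (hw : rkFace L ({v₁, v₂, vw} : Finset V))
    (he : rkFace L ({v₁, v₂, ve} : Finset V))
    (hdist : vn ≠ v₁ ∧ vn ≠ v₂ ∧ vn ≠ vw ∧ vn ≠ ve) (hLn : L vn = 0) :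
    rkFace L ({vn, v₁, vw} : Finset V) ∧
    rkFace L ({vn, v₂, vw} : Finset V) ∧
    rkFace L ({vn, v₁, ve} : Finset V) ∧
    rkFace L ({vn, v₂, ve} : Finset V) := by
  have hvw : L vw ≠ 0 := by
    obtain ⟨v, hv, hne⟩ := hw.1
    simp only [Finset.mem_insert, Finset.mem_singleton] at hv
    rcases hv with rfl | rfl | rfl <;> simp_all
  have hve : L ve ≠ 0 := by
    obtain ⟨v, hv, hne⟩ := he.1
    simp only [Finset.mem_insert, Finset.mem_singleton] at hv
    rcases hv with rfl | rfl | rfl <;> simp_all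
  refine ⟨⟨⟨vw, by simp, hvw⟩, ?_⟩, ⟨⟨vw, by simp, hvw⟩, ?_⟩,
    ⟨⟨ve, by simp, hve⟩, ?_⟩, ⟨⟨ve, by simp, hve⟩, ?_⟩⟩ <;>
  · intro a ha b hb hna hnb
    simp only [Finset.mem_insert, Finset.mem_singleton] at ha hb
    rcases ha with rfl | rfl | rfl <;> rcases hb with rfl | rfl | rfl <;> simp_all
end
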